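/- arXiv:1910.11055 — 3 statements merged into one kernel-verified Lean document; each statement's English description precedes it below -/
import Mathlib

section
/- Let E be a vector lattice with the principal projection property, F a vector lattice, Φ : 𝔅(E) → 𝔅(F) a Boolean homomorphism, and T : E → F atomic subordinate to Φ. Then for every x ∈ E and every fragment y ⊑ x, T y is a fragment of T x and |T y| ≤ |T x|; in particular T is laterally-to-order bounded, i.e. the image T(𝓕_x) of the set of fragments of x is order bounded in F for every x ∈ E. -/
namespace VL

/-- Two elements of a vector lattice are disjoint if `|x| ⊓ |y| = 0`. -/
def VDisjoint {G : Type*} [Lattice G] [AddCommGroup G] (x y : G) : Prop :=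
  |x| ⊓ |y| = 0

/-- `y` is a fragment of `x` if `y ⊥ (x - y)`. -/
def Fragment {G : Type*} [Lattice G] [AddCommGroup G] (y x : G) : Prop :=
  VDisjoint y (x - y)

/-- An order projection: a linear idempotent `π` with `0 ≤ π x ≤ x` for all `x ≥ 0`. -/
def IsOrderProjection {G : Type*} [Lattice G] [AddCommGroup G] [Module ℝ G]
    (π : G →ₗ[ℝ] G) : Prop :=
  (∀ x, π (π x) = π x) ∧ ∀ x : G, 0 ≤ x → 0 ≤ π x ∧ π x ≤ x

/-- A map between the order projections of `E` and of `F` is a Boolean homomorphism if it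
maps order projections to order projections and preserves the Boolean operations
`π ∧ ρ = π ∘ ρ`, `π ∨ ρ = π + ρ - π ∘ ρ` and `compl π = Id - π`. -/
def IsBooleanHom {E F : Type*} [Lattice E] [AddCommGroup E] [Module ℝ E]
    [Lattice F] [AddCommGroup F] [Module ℝ F]
    (Φ : (E →ₗ[ℝ] E) → (F →ₗ[ℝ] F)) : Prop :=
  (∀ π, IsOrderProjection π → IsOrderProjection (Φ π)) ∧
  (∀ π ρ, IsOrderProjection π → IsOrderProjection ρ →
    Φ (π ∘ₗ ρ) = Φ π ∘ₗ Φ ρ) ∧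
  (∀ π ρ, IsOrderProjection π → IsOrderProjection ρ →
    Φ (π + ρ - π ∘ₗ ρ) = Φ π + Φ ρ - Φ π ∘ₗ Φ ρ) ∧
  (∀ π, IsOrderProjection π → Φ (LinearMap.id - π) = LinearMap.id - Φ π)

/-- `T` is atomic subordinate to `Φ` if `T (π x) = Φ(π) (T x)` for every order projection. -/
def IsAtomic {E F : Type*} [Lattice E] [AddCommGroup E] [Module ℝ E]
    [Lattice F] [AddCommGroup F] [Module ℝ F]
    (Φ : (E →ₗ[ℝ] E) → (F →ₗ[ℝ] F)) (T : E → F) : Prop :=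
  ∀ π : E →ₗ[ℝ] E, IsOrderProjection π → ∀ x : E, T (π x) = Φ π (T x)

/-- The principal projection property: for every `x` there is an order projection `π_x`
(the projection onto the band generated by `x`) such that `z - π_x z ⊥ x` for all `z`,
and `π_x z ⊥ w` whenever `w ⊥ x`. -/
def HasPPP (E : Type*) [Lattice E] [AddCommGroup E] [Module ℝ E] : Prop :=
  ∀ x : E, ∃ π : E →ₗ[ℝ] E, IsOrderProjection π ∧
    (∀ z : E, VDisjoint (z - π z) x) ∧
    (∀ z w : E, VDisjoint w x → VDisjoint (π z) w)

/-- Dedekind completeness: every nonempty set bounded above has a supremum. -/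
def DedekindComplete (F : Type*) [Lattice F] : Prop :=
  ∀ S : Set F, S.Nonempty → BddAbove S → ∃ b, IsLUB S b

section Aux

variable {G : Type*} [Lattice G] [AddCommGroup G] [CovariantClass G G (· + ·) (· ≤ ·)]

omit [CovariantClass G G (· + ·) (· ≤ ·)] in
lemma vdisjoint_symm {a b : G} (h : VDisjoint a b) : VDisjoint b a := by
  unfold VDisjoint at *; rwa [inf_comm]

/-- If `a` is disjoint from `b` and from `c`, and `a = b + c`, then `a = 0`. -/
lemma eq_zero_of_disj (a b c : G) (hab : VDisjoint a b) (hac : VDisjoint a c)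
    (h : a = b + c) : a = 0 := by
  have hm : |a| ≤ |b| + |c| := h ▸ abs_add_le b c
  have h1 : |a| - (|a| ⊓ |c|) ≤ |b| := by
    rw [sub_inf]
    exact sup_le (by simpa using abs_nonneg b) (sub_le_iff_le_add'.mpr (by rwa [add_comm] at hm))
  have h2 : |a| - (|a| ⊓ |c|) ≤ |a| :=
    sub_le_self _ (le_inf (abs_nonneg a) (abs_nonneg c))
  have h3 : |a| - (|a| ⊓ |c|) ≤ 0 := le_trans (le_inf h2 h1) (le_of_eq hab)
  rw [hac, sub_zero] at h3
  have ha1 : a ≤ |a| := le_sup_left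
  have ha2 : -a ≤ |a| := le_sup_right
  exact le_antisymm (ha1.trans h3) (by simpa using ha2.trans h3)

end Aux


section Proj

variable {G : Type*} [Lattice G] [AddCommGroup G] [Module ℝ G]
  [CovariantClass G G (· + ·) (· ≤ ·)]

lemma proj_mono {ρ : G →ₗ[ℝ] G} (hρ : IsOrderProjection ρ) {u w : G} (h : u ≤ w) :
    ρ u ≤ ρ w := by
  have h0 := (hρ.2 (w - u) (sub_nonneg.mpr h)).1
  rw [map_sub] at h0
  exact sub_nonneg.mp h0

lemma proj_compl_mono {ρ : G →ₗ[ℝ] G} (hρ : IsOrderProjection ρ) {u w : G} (h : u ≤ w) :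
    u - ρ u ≤ w - ρ w := by
  have h0 := (hρ.2 (w - u) (sub_nonneg.mpr h)).2
  rw [map_sub] at h0
  have e : (w - ρ w) - (u - ρ u) = (w - u) - (ρ w - ρ u) := by abel
  rw [← sub_nonneg, e]
  exact sub_nonneg.mpr h0

/-- For an order projection `ρ`, `ρ v` is a fragment of `v` with `|ρ v| ≤ |v|`. -/
lemma proj_fragment {ρ : G →ₗ[ℝ] G} (hρ : IsOrderProjection ρ) (v : G) :
    Fragment (ρ v) v ∧ |ρ v| ≤ |v| := by
  obtain ⟨hρ0, hρ1⟩ := hρ.2 |v| (abs_nonneg v)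
  have h1 : |ρ v| ≤ ρ |v| := by
    refine sup_le (proj_mono hρ (le_sup_left : v ≤ |v|)) ?_
    have h := proj_mono hρ (le_sup_right : -v ≤ |v|)
    rwa [map_neg] at h
  have h2 : |v - ρ v| ≤ |v| - ρ |v| := by
    refine sup_le (proj_compl_mono hρ (le_sup_left : v ≤ |v|)) ?_
    have h := proj_compl_mono hρ (le_sup_right : -v ≤ |v|)
    rw [map_neg] at h
    have e : -v - -(ρ v) = -(v - ρ v) := by abel
    rwa [e] at h
  have hd : ρ |v| ⊓ (|v| - ρ |v|) = 0 := by
    set c := ρ |v| ⊓ (|v| - ρ |v|) with hc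
    have hc0 : 0 ≤ c := le_inf hρ0 (sub_nonneg.mpr hρ1)
    have hρc : ρ c = 0 := by
      have h3 : ρ c ≤ ρ (|v| - ρ |v|) := proj_mono hρ inf_le_right
      rw [map_sub, hρ.1, sub_self] at h3
      exact le_antisymm h3 (hρ.2 c hc0).1
    have h4 : c - ρ c ≤ ρ |v| - ρ (ρ |v|) := proj_compl_mono hρ inf_le_left
    rw [hρ.1, sub_self, hρc, sub_zero] at h4
    exact le_antisymm h4 hc0
  refine ⟨?_, h1.trans hρ1⟩
  unfold Fragment VDisjoint
  exact le_antisymm (hd ▸ inf_le_inf h1 h2) (le_inf (abs_nonneg _) (abs_nonneg _))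

end Proj

variable {E F : Type*}
  [Lattice E] [AddCommGroup E] [Module ℝ E]
  [CovariantClass E E (· + ·) (· ≤ ·)] [PosSMulMono ℝ E]
  [Lattice F] [AddCommGroup F] [Module ℝ F]
  [CovariantClass F F (· + ·) (· ≤ ·)] [PosSMulMono ℝ F]

/-- an atomic operator maps fragments of `x` to fragments of `T x`, with
`|T y| ≤ |T x|`; in particular it is laterally-to-order bounded. -/
theorem atomic_laterally_to_order_bounded
    (hE : HasPPP E) (Φ : (E →ₗ[ℝ] E) → (F →ₗ[ℝ] F)) (hΦ : IsBooleanHom Φ)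
    (T : E → F) (hT : IsAtomic Φ T) :
    (∀ x y : E, Fragment y x → Fragment (T y) (T x) ∧ |T y| ≤ |T x|) ∧
    ∀ x : E, ∃ a b : F, ∀ y : E, Fragment y x → a ≤ T y ∧ T y ≤ b := by
  have main : ∀ x y : E, Fragment y x → Fragment (T y) (T x) ∧ |T y| ≤ |T x| := by
    intro x y hyx
    obtain ⟨π, hπ, h2, h3⟩ := hE y
    have hu : π y = y := by
      have hdis1 : VDisjoint (y - π y) y := h2 y
      have hdis2 : VDisjoint (y - π y) (π y) := vdisjoint_symm (h3 y (y - π y) hdis1)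
      have hdis2' : VDisjoint (y - π y) (-(π y)) := by
        unfold VDisjoint at *; rwa [abs_neg]
      have h0 : y - π y = 0 :=
        eq_zero_of_disj (y - π y) y (-(π y)) hdis1 hdis2' (by abel)
      exact (sub_eq_zero.mp h0).symm
    have hdxy : VDisjoint (x - y) y := vdisjoint_symm hyx
    have hv1 : VDisjoint (π (x - y)) (x - y) := h3 (x - y) (x - y) hdxy
    have hu' : VDisjoint ((x - y) - π (x - y)) y := h2 (x - y)
    have hv2 : VDisjoint (π (x - y)) ((x - y) - π (x - y)) := h3 (x - y) _ hu'
    have hv2' : VDisjoint (π (x - y)) (-((x - y) - π (x - y))) := by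
      unfold VDisjoint at *; rwa [abs_neg]
    have h0 : π (x - y) = 0 :=
      eq_zero_of_disj _ (x - y) (-((x - y) - π (x - y))) hv1 hv2' (by abel)
    have hπx : π x = y := by
      have e : π x = π y + π (x - y) := by rw [← map_add]; congr 1; abel
      rw [e, hu, h0, add_zero]
    have hρ := hΦ.1 π hπ
    have hTy : T y = Φ π (T x) := by rw [← hπx]; exact hT π hπ x
    obtain ⟨hf, hle⟩ := proj_fragment hρ (T x)
    rw [hTy]
    exact ⟨hf, hle⟩
  refine ⟨main, fun x => ⟨-|T x|, |T x|, fun y hy => ?_⟩⟩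
  have h := (main x y hy).2
  constructor
  · have h2 : -(T y) ≤ |T x| := (le_sup_right : -(T y) ≤ |T y|).trans h
    exact neg_le.mpr h2
  · exact (le_sup_left : T y ≤ |T y|).trans h

end VL
end

section
/- Let E be a vector lattice with the principal projection property, F a Dedekind complete vector lattice, Φ : 𝔅(E) → 𝔅(F) a Boolean homomorphism, and let T, S : E → F both be atomic subordinate to Φ. Then for every x ∈ E: (i) the set {T y + S z : y, z ∈ E, y ⊥ z, y + z = x} has supremum T x ⊔ S x and infimum T x ⊓ S x in F; (ii) the set {T y : y ⊑ x} has supremum (T x)⁺ = T x ⊔ 0 and infimum −(T x)⁻ = T x ⊓ 0. (Consequently, in the vector lattice of regular orthogonally additive operators, (T ∨ S)x = Tx ⊔ Sx, (T ∧ S)x = Tx ⊓ Sx, T⁺x = (Tx)⁺, T⁻x = (Tx)⁻ and |T|x = |Tx|.) -/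
namespace VL

section AuxLG
variable {G : Type*} [Lattice G] [AddCommGroup G] [CovariantClass G G (· + ·) (· ≤ ·)]

lemma my_abs_eq_zero {a : G} (h : |a| = 0) : a = 0 :=
  le_antisymm (h ▸ le_abs_self a) (neg_nonpos.mp (h ▸ neg_le_abs a))

lemma my_inf_add_le {a b c : G} (ha : 0 ≤ a) (hb : 0 ≤ b) (hc : 0 ≤ c) :
    a ⊓ (b + c) ≤ a ⊓ b + a ⊓ c := by
  rw [← sub_le_iff_le_add', sub_inf]
  refine sup_le (le_trans (by simp) (le_inf ha hc)) (le_inf ?_ ?_)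
  · exact sub_le_iff_le_add.mpr (inf_le_left.trans (le_add_of_nonneg_right hb))
  · exact sub_le_iff_le_add.mpr (inf_le_right.trans_eq (add_comm b c))

omit [CovariantClass G G (· + ·) (· ≤ ·)] in
lemma VDisjoint.symm' {x y : G} (h : VDisjoint x y) : VDisjoint y x := by
  rwa [VDisjoint, inf_comm]

lemma VDisjoint.of_abs_le {u v w : G} (h : VDisjoint u v) (hw : |w| ≤ |u|) :
    VDisjoint w v :=
  le_antisymm (h ▸ inf_le_inf_right _ hw) (le_inf (abs_nonneg w) (abs_nonneg v))

lemma VDisjoint.zero_of_le_double {w y : G} (h : VDisjoint w y) (hw : |w| ≤ |y| + |y|) :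
    w = 0 := by
  apply my_abs_eq_zero
  have h1 : |w| ⊓ (|y| + |y|) ≤ |w| ⊓ |y| + |w| ⊓ |y| :=
    my_inf_add_le (abs_nonneg w) (abs_nonneg y) (abs_nonneg y)
  rw [h] at h1
  exact le_antisymm (by simpa [inf_eq_left.mpr hw] using h1) (abs_nonneg w)

lemma vdisjoint_zero (x : G) : VDisjoint x 0 := by
  simp [VDisjoint, inf_eq_right.mpr (abs_nonneg x)]

end AuxLG

section AuxProj
variable {G : Type*} [Lattice G] [AddCommGroup G] [Module ℝ G]
  [CovariantClass G G (· + ·) (· ≤ ·)]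

lemma IsOrderProjection.abs_apply_le {π : G →ₗ[ℝ] G} (hπ : IsOrderProjection π) (z : G) :
    |π z| ≤ |z| := by
  have hp := hπ.2 z⁺ (posPart_nonneg z)
  have hn := hπ.2 z⁻ (negPart_nonneg z)
  have hdz : π z = π z⁺ - π z⁻ := by rw [← map_sub, posPart_sub_negPart]
  rw [hdz, ← posPart_add_negPart z]
  refine abs_le'.mpr ⟨?_, ?_⟩
  · calc π z⁺ - π z⁻ ≤ z⁺ - 0 := sub_le_sub hp.2 hn.1
      _ = z⁺ := sub_zero _
      _ ≤ z⁺ + z⁻ := le_add_of_nonneg_right (negPart_nonneg z)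
  · rw [neg_sub]
    calc π z⁻ - π z⁺ ≤ z⁻ - 0 := sub_le_sub hn.2 hp.1
      _ = z⁻ := sub_zero _
      _ ≤ z⁺ + z⁻ := le_add_of_nonneg_left (posPart_nonneg z)

lemma IsOrderProjection.le_posPart {π : G →ₗ[ℝ] G} (hπ : IsOrderProjection π) (z : G) :
    π z ≤ z⁺ := by
  have hp := hπ.2 z⁺ (posPart_nonneg z)
  have hn := hπ.2 z⁻ (negPart_nonneg z)
  have hdz : π z = π z⁺ - π z⁻ := by rw [← map_sub, posPart_sub_negPart]
  rw [hdz]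
  calc π z⁺ - π z⁻ ≤ z⁺ - 0 := sub_le_sub hp.2 hn.1
    _ = z⁺ := sub_zero _

lemma IsOrderProjection.neg_negPart_le {π : G →ₗ[ℝ] G} (hπ : IsOrderProjection π) (z : G) :
    -z⁻ ≤ π z := by
  have hp := hπ.2 z⁺ (posPart_nonneg z)
  have hn := hπ.2 z⁻ (negPart_nonneg z)
  have hdz : π z = π z⁺ - π z⁻ := by rw [← map_sub, posPart_sub_negPart]
  rw [hdz]
  calc -z⁻ = 0 - z⁻ := (zero_sub _).symm
    _ ≤ π z⁺ - π z⁻ := sub_le_sub hp.1 hn.2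

lemma isOrderProjection_id : IsOrderProjection (LinearMap.id : G →ₗ[ℝ] G) :=
  ⟨fun _ => rfl, fun _ hx => ⟨hx, le_rfl⟩⟩

lemma isOrderProjection_zero : IsOrderProjection (0 : G →ₗ[ℝ] G) :=
  ⟨fun _ => by simp, fun _ hx => ⟨le_rfl, hx⟩⟩

lemma IsOrderProjection.compl {π : G →ₗ[ℝ] G} (hπ : IsOrderProjection π) :
    IsOrderProjection (LinearMap.id - π) := by
  constructor
  · intro x
    simp only [LinearMap.sub_apply, LinearMap.id_apply, map_sub, hπ.1]
    abel
  · intro x hx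
    refine ⟨?_, ?_⟩
    · simp only [LinearMap.sub_apply, LinearMap.id_apply]
      exact sub_nonneg.mpr (hπ.2 x hx).2
    · simp only [LinearMap.sub_apply, LinearMap.id_apply]
      exact sub_le_self x (hπ.2 x hx).1

end AuxProj

section AuxBH
variable {E F : Type*}
  [Lattice E] [AddCommGroup E] [Module ℝ E]
  [CovariantClass E E (· + ·) (· ≤ ·)] [PosSMulMono ℝ E]
  [Lattice F] [AddCommGroup F] [Module ℝ F]
  [CovariantClass F F (· + ·) (· ≤ ·)] [PosSMulMono ℝ F]

lemma IsBooleanHom.map_zero {Φ : (E →ₗ[ℝ] E) → (F →ₗ[ℝ] F)} (hΦ : IsBooleanHom Φ) :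
    Φ 0 = 0 := by
  have h00 : Φ 0 ∘ₗ Φ 0 = Φ 0 := by
    rw [← hΦ.2.1 0 0 isOrderProjection_zero isOrderProjection_zero]
    simp
  have hid : Φ LinearMap.id = LinearMap.id - Φ 0 := by
    have := hΦ.2.2.2 LinearMap.id isOrderProjection_id
    rw [sub_self] at this
    rw [eq_sub_iff_add_eq, ← eq_sub_iff_add_eq', ← this]
  have hmix : Φ 0 = Φ LinearMap.id ∘ₗ Φ 0 := by
    rw [← hΦ.2.1 LinearMap.id 0 isOrderProjection_id isOrderProjection_zero]
    simp
  rw [hid, LinearMap.sub_comp, LinearMap.id_comp, h00, sub_self] at hmix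
  exact hmix

lemma IsAtomic.map_zero {Φ : (E →ₗ[ℝ] E) → (F →ₗ[ℝ] F)} (hΦ : IsBooleanHom Φ)
    {T : E → F} (hT : IsAtomic Φ T) : T 0 = 0 := by
  have := hT 0 isOrderProjection_zero 0
  simpa [hΦ.map_zero] using this

/-- Key lemma: parts (i) and (ii). -/
lemma atomic_sup_inf
    (hE : HasPPP E)
    (Φ : (E →ₗ[ℝ] E) → (F →ₗ[ℝ] F)) (hΦ : IsBooleanHom Φ)
    (T S : E → F) (hT : IsAtomic Φ T) (hS : IsAtomic Φ S) (x : E) :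
    IsLUB {w : F | ∃ y z : E, VDisjoint y z ∧ y + z = x ∧ w = T y + S z} (T x ⊔ S x) ∧
    IsGLB {w : F | ∃ y z : E, VDisjoint y z ∧ y + z = x ∧ w = T y + S z} (T x ⊓ S x) := by
  have hmem1 : T x + S 0 ∈ {w : F | ∃ y z : E, VDisjoint y z ∧ y + z = x ∧ w = T y + S z} :=
    ⟨x, 0, vdisjoint_zero x, by simp, rfl⟩
  have hmem2 : T 0 + S x ∈ {w : F | ∃ y z : E, VDisjoint y z ∧ y + z = x ∧ w = T y + S z} :=
    ⟨0, x, (vdisjoint_zero x).symm', by simp, rfl⟩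
  have hS0 : S 0 = 0 := IsAtomic.map_zero hΦ hS
  have hT0 : T 0 = 0 := IsAtomic.map_zero hΦ hT
  -- main bound
  have hbound : ∀ w ∈ {w : F | ∃ y z : E, VDisjoint y z ∧ y + z = x ∧ w = T y + S z},
      T x ⊓ S x ≤ w ∧ w ≤ T x ⊔ S x := by
    rintro w ⟨y, z, hyz, hsum, rfl⟩
    obtain ⟨π, hπ, hπ1, hπ2⟩ := hE y
    -- π y = y
    have hπy : π y = y := by
      have hw : VDisjoint (y - π y) y := hπ1 y
      have habs : |y - π y| ≤ |y| + |y| := by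
        calc |y - π y| ≤ |y| + |π y| := by
              simpa [sub_eq_add_neg, abs_neg] using abs_add_le y (-π y)
          _ ≤ |y| + |y| := add_le_add_right (hπ.abs_apply_le y) _
      have := hw.zero_of_le_double habs
      rw [sub_eq_zero] at this
      exact this.symm
    -- π z = 0
    have hπz : π z = 0 := by
      have hd : VDisjoint (π z) z := hπ2 z z hyz.symm'
      rw [VDisjoint, inf_eq_left.mpr (hπ.abs_apply_le z)] at hd
      exact my_abs_eq_zero hd
    have hπx : π x = y := by rw [← hsum, map_add, hπy, hπz, add_zero]
    have hz : z = (LinearMap.id - π : E →ₗ[ℝ] E) x := by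
      simp only [LinearMap.sub_apply, LinearMap.id_apply, hπx]
      rw [← hsum]; abel
    have hTy : T y = Φ π (T x) := by rw [← hπx, hT π hπ x]
    have hSz : S z = S x - Φ π (S x) := by
      rw [hz, hS _ hπ.compl x, hΦ.2.2.2 π hπ]
      simp
    set p := Φ π with hp
    have hpProj : IsOrderProjection p := hΦ.1 π hπ
    have hw : T y + S z = p (T x - S x) + S x := by
      rw [hTy, hSz, map_sub]; abel
    constructor
    · rw [hw]
      have h1 : (T x - S x) ⊓ 0 + S x ≤ p (T x - S x) + S x := by
        refine add_le_add_left ?_ _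
        have h2 := hpProj.neg_negPart_le (T x - S x)
        rwa [negPart_def, neg_sup, neg_neg, neg_zero] at h2
      calc T x ⊓ S x = (T x - S x) ⊓ 0 + S x := by rw [inf_add]; simp
        _ ≤ _ := h1
    · rw [hw]
      calc p (T x - S x) + S x ≤ (T x - S x)⁺ + S x :=
            add_le_add_left (hpProj.le_posPart _) _
        _ = T x ⊔ S x := by rw [posPart_def, sup_add]; simp
  refine ⟨⟨fun w hw => (hbound w hw).2, fun b hb => sup_le ?_ ?_⟩,
    ⟨fun w hw => (hbound w hw).1, fun b hb => le_inf ?_ ?_⟩⟩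
  · have := hb hmem1; rwa [hS0, add_zero] at this
  · have := hb hmem2; rwa [hT0, zero_add] at this
  · have := hb hmem1; rwa [hS0, add_zero] at this
  · have := hb hmem2; rwa [hT0, zero_add] at this

end AuxBH


variable {E F : Type*}
  [Lattice E] [AddCommGroup E] [Module ℝ E]
  [CovariantClass E E (· + ·) (· ≤ ·)] [PosSMulMono ℝ E]
  [Lattice F] [AddCommGroup F] [Module ℝ F]
  [CovariantClass F F (· + ·) (· ≤ ·)] [PosSMulMono ℝ F]

/-- lattice-operation formulas for atomic operators. -/
theorem atomic_lattice_formulas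
    (hE : HasPPP E) (hF : DedekindComplete F)
    (Φ : (E →ₗ[ℝ] E) → (F →ₗ[ℝ] F)) (hΦ : IsBooleanHom Φ)
    (T S : E → F) (hT : IsAtomic Φ T) (hS : IsAtomic Φ S) :
    ∀ x : E,
      IsLUB {w : F | ∃ y z : E, VDisjoint y z ∧ y + z = x ∧ w = T y + S z} (T x ⊔ S x) ∧
      IsGLB {w : F | ∃ y z : E, VDisjoint y z ∧ y + z = x ∧ w = T y + S z} (T x ⊓ S x) ∧
      IsLUB {w : F | ∃ y : E, Fragment y x ∧ w = T y} (T x ⊔ 0) ∧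
      IsGLB {w : F | ∃ y : E, Fragment y x ∧ w = T y} (T x ⊓ 0) := by
  intro x
  obtain ⟨h1, h2⟩ := atomic_sup_inf hE Φ hΦ T S hT hS x
  have hZatomic : IsAtomic Φ (fun _ : E => (0 : F)) := fun π _ _ => (map_zero (Φ π)).symm
  obtain ⟨h3, h4⟩ := atomic_sup_inf hE Φ hΦ T (fun _ => 0) hT hZatomic x
  have hset : {w : F | ∃ y z : E, VDisjoint y z ∧ y + z = x ∧ w = T y + (fun _ : E => (0:F)) z}
      = {w : F | ∃ y : E, Fragment y x ∧ w = T y} := by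
    ext w
    constructor
    · rintro ⟨y, z, hyz, hsum, rfl⟩
      refine ⟨y, ?_, by simp⟩
      rw [Fragment, show x - y = z by rw [← hsum]; abel]
      exact hyz
    · rintro ⟨y, hy, rfl⟩
      exact ⟨y, x - y, hy, by abel, by simp⟩
  rw [hset] at h3 h4
  exact ⟨h1, h2, h3, h4⟩

end VL
end

section
/- Let E be a vector lattice with the principal projection property, F a Dedekind complete vector lattice, Φ : 𝔅(E) → 𝔅(F) a Boolean homomorphism, and for every positive orthogonally additive operator T : E → F set R(T)(x) := inf { Σᵢ Φ(πᵢ)(T(πᵢ x)) : (πᵢ) ∈ 𝔇₀ }. Then R is additive on the positive cone: for all positive orthogonally additive operators T₁, T₂ : E → F and all x ∈ E, R(T₁ + T₂)(x) = R(T₁)(x) + R(T₂)(x). -/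
namespace VL

variable {E F : Type*}
  [Lattice E] [AddCommGroup E] [Module ℝ E]
  [CovariantClass E E (· + ·) (· ≤ ·)] [PosSMulMono ℝ E]
  [Lattice F] [AddCommGroup F] [Module ℝ F]
  [CovariantClass F F (· + ·) (· ≤ ·)] [PosSMulMono ℝ F]

/-- A finite partition of the identity: finitely many pairwise disjoint order projections
summing to the identity. -/
def IsPartitionOfIdentity {E : Type*} [Lattice E] [AddCommGroup E] [Module ℝ E]
    {n : ℕ} (π : Fin n → E →ₗ[ℝ] E) : Prop :=
  (∀ i, IsOrderProjection (π i)) ∧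
  (∀ i j, i ≠ j → (π i) ∘ₗ (π j) = 0) ∧
  (∑ i, π i) = LinearMap.id

/-- The set `{ Σᵢ Φ(πᵢ)(T(πᵢ x)) : (πᵢ) ∈ 𝔇₀ }` of values at `x` of the operators
associated to finite partitions of the identity. -/
def atomicSumSet (Φ : (E →ₗ[ℝ] E) → (F →ₗ[ℝ] F)) (T : E → F) (x : E) : Set F :=
  {w : F | ∃ (n : ℕ) (π : Fin n → E →ₗ[ℝ] E), IsPartitionOfIdentity π ∧
    w = ∑ i, Φ (π i) (T (π i x))}

section Aux

variable {G : Type*} [Lattice G] [AddCommGroup G] [Module ℝ G]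
  [CovariantClass G G (· + ·) (· ≤ ·)]

theorem sum_nonneg' {ι : Type*} {s : Finset ι} {f : ι → G} (h : ∀ i ∈ s, 0 ≤ f i) :
    0 ≤ ∑ i ∈ s, f i := by
  induction s using Finset.cons_induction with
  | empty => simp
  | cons k t hk ih =>
    rw [Finset.sum_cons]
    exact add_nonneg (h k (Finset.mem_cons_self k t))
      (ih fun i hi => h i (Finset.mem_cons_of_mem hi))

theorem sum_le_sum' {ι : Type*} {s : Finset ι} {f g : ι → G} (h : ∀ i ∈ s, f i ≤ g i) :
    ∑ i ∈ s, f i ≤ ∑ i ∈ s, g i := by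
  induction s using Finset.cons_induction with
  | empty => simp
  | cons k t hk ih =>
    rw [Finset.sum_cons, Finset.sum_cons]
    exact add_le_add (h k (Finset.mem_cons_self k t))
      (ih fun i hi => h i (Finset.mem_cons_of_mem hi))

theorem op_mono {π : G →ₗ[ℝ] G} (hπ : IsOrderProjection π) {z w : G} (h : z ≤ w) :
    π z ≤ π w := by
  have h0 : 0 ≤ π (w - z) := (hπ.2 _ (sub_nonneg.mpr h)).1
  rw [map_sub] at h0
  exact sub_nonneg.mp h0

theorem fix_of_le {π : G →ₗ[ℝ] G} (hπ : IsOrderProjection π) {z w : G}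
    (hz : 0 ≤ z) (hzw : z ≤ w) (hw : π w = w) : π z = z := by
  refine le_antisymm (hπ.2 z hz).2 ?_
  have h1 : π (w - z) ≤ w - z := (hπ.2 _ (sub_nonneg.mpr hzw)).2
  rw [map_sub, hw] at h1
  have : z ≤ π z := by
    have := sub_le_sub_left h1 w
    simpa using this
  exact this

theorem comp_inf {π ρ : G →ₗ[ℝ] G} (hπ : IsOrderProjection π) (hρ : IsOrderProjection ρ)
    {x : G} (hx : 0 ≤ x) : π (ρ x) = π x ⊓ ρ x := by
  refine le_antisymm (le_inf ?_ ?_) ?_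
  · exact op_mono hπ (hρ.2 x hx).2
  · exact (hπ.2 _ (hρ.2 x hx).1).2
  · have hu : (0 : G) ≤ π x ⊓ ρ x := le_inf (hπ.2 x hx).1 (hρ.2 x hx).1
    have hfix : π (π x ⊓ ρ x) = π x ⊓ ρ x :=
      fix_of_le hπ hu inf_le_left (hπ.1 x)
    calc π x ⊓ ρ x = π (π x ⊓ ρ x) := hfix.symm
      _ ≤ π (ρ x) := op_mono hπ inf_le_right

theorem op_comm {π ρ : G →ₗ[ℝ] G} (hπ : IsOrderProjection π) (hρ : IsOrderProjection ρ)
    (x : G) : π (ρ x) = ρ (π x) := by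
  have hpos : ∀ y : G, 0 ≤ y → π (ρ y) = ρ (π y) := fun y hy => by
    rw [comp_inf hπ hρ hy, comp_inf hρ hπ hy, inf_comm]
  have hx : x = x⁺ - x⁻ := (posPart_sub_negPart x).symm
  calc π (ρ x) = π (ρ (x⁺ - x⁻)) := by rw [← hx]
    _ = π (ρ x⁺) - π (ρ x⁻) := by rw [map_sub, map_sub]
    _ = ρ (π x⁺) - ρ (π x⁻) := by
        rw [hpos _ (posPart_nonneg x), hpos _ (negPart_nonneg x)]
    _ = ρ (π x) := by rw [← map_sub, ← map_sub, ← hx]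

theorem comp_isOP {π ρ : G →ₗ[ℝ] G} (hπ : IsOrderProjection π) (hρ : IsOrderProjection ρ) :
    IsOrderProjection (π ∘ₗ ρ) := by
  constructor
  · intro x
    simp only [LinearMap.comp_apply]
    rw [op_comm hρ hπ (ρ x), hρ.1 x, hπ.1]
  · intro x hx
    have h1 := hρ.2 x hx
    have h2 := hπ.2 _ h1.1
    exact ⟨h2.1, le_trans h2.2 h1.2⟩

theorem abs_op_le {π : G →ₗ[ℝ] G} (hπ : IsOrderProjection π) (z : G) :
    |π z| ≤ π |z| := by
  have h2 : -z ≤ |z| := by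
    rw [show |z| = z ⊔ -z from rfl]
    exact le_sup_right
  refine sup_le (op_mono hπ (le_abs_self z)) ?_
  rw [← map_neg]
  exact op_mono hπ h2

theorem disj_of_comp {π ρ : G →ₗ[ℝ] G} (hπ : IsOrderProjection π) (hρ : IsOrderProjection ρ)
    (h : ∀ u, π (ρ u) = 0) (z : G) : VDisjoint (π z) (ρ z) := by
  refine le_antisymm ?_ (le_inf (abs_nonneg _) (abs_nonneg _))
  calc |π z| ⊓ |ρ z| ≤ π |z| ⊓ ρ |z| :=
        inf_le_inf (abs_op_le hπ z) (abs_op_le hρ z)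
    _ = π (ρ |z|) := (comp_inf hπ hρ (abs_nonneg z)).symm
    _ = 0 := h _

theorem partial_sum_isOP {m : ℕ} {ρ : Fin m → G →ₗ[ℝ] G} (hρ : IsPartitionOfIdentity ρ)
    (s : Finset (Fin m)) : IsOrderProjection (∑ j ∈ s, ρ j) := by
  constructor
  · intro x
    have hx : ∀ j ∈ s, ρ j ((∑ l ∈ s, ρ l) x) = ρ j x := by
      intro j hj
      rw [LinearMap.sum_apply, map_sum]
      rw [Finset.sum_eq_single_of_mem j hj]
      · exact (hρ.1 j).1 x
      · intro l _ hlj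
        have h0 : (ρ j ∘ₗ ρ l) x = (0 : G →ₗ[ℝ] G) x := by rw [hρ.2.1 j l hlj.symm]
        simpa using h0
    calc (∑ j ∈ s, ρ j) ((∑ l ∈ s, ρ l) x)
        = ∑ j ∈ s, ρ j ((∑ l ∈ s, ρ l) x) := LinearMap.sum_apply _ _ _
      _ = ∑ j ∈ s, ρ j x := Finset.sum_congr rfl hx
      _ = (∑ j ∈ s, ρ j) x := (LinearMap.sum_apply _ _ _).symm
  · intro x hx
    constructor
    · rw [LinearMap.sum_apply]
      exact sum_nonneg' fun j _ => ((hρ.1 j).2 x hx).1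
    · have hsplit : (∑ j ∈ s, ρ j) x + (∑ j ∈ sᶜ, ρ j) x = x := by
        rw [← LinearMap.add_apply, Finset.sum_add_sum_compl, hρ.2.2, LinearMap.id_apply]
      have hnn : 0 ≤ (∑ j ∈ sᶜ, ρ j) x := by
        rw [LinearMap.sum_apply]
        exact sum_nonneg' fun j _ => ((hρ.1 j).2 x hx).1
      calc (∑ j ∈ s, ρ j) x ≤ (∑ j ∈ s, ρ j) x + (∑ j ∈ sᶜ, ρ j) x :=
            le_add_of_nonneg_right hnn
        _ = x := hsplit

theorem oa_sum {H : Type*} [AddCommGroup H] (T : G → H)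
    (hoa : ∀ x y : G, VDisjoint x y → T (x + y) = T x + T y)
    {m : ℕ} {ρ : Fin m → G →ₗ[ℝ] G} (hρ : IsPartitionOfIdentity ρ) (y : G) :
    T y = ∑ j, T (ρ j y) := by
  have hT0 : T 0 = 0 := by
    have h := hoa 0 0 (by simp [VDisjoint])
    simpa using h.symm
  have key : ∀ s : Finset (Fin m), T ((∑ j ∈ s, ρ j) y) = ∑ j ∈ s, T (ρ j y) := by
    intro s
    induction s using Finset.induction_on with
    | empty => simpa using hT0
    | @insert k s hk ih =>
      have hcomp : ∀ u, ρ k ((∑ j ∈ s, ρ j) u) = 0 := by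
        intro u
        rw [LinearMap.sum_apply, map_sum]
        refine Finset.sum_eq_zero fun j hj => ?_
        have hkj : k ≠ j := fun h => hk (h ▸ hj)
        have : (ρ k ∘ₗ ρ j) u = (0 : G →ₗ[ℝ] G) u := by rw [hρ.2.1 k j hkj]
        simpa using this
      have hdisj : VDisjoint (ρ k y) ((∑ j ∈ s, ρ j) y) :=
        disj_of_comp (hρ.1 k) (partial_sum_isOP hρ s) hcomp y
      rw [Finset.sum_insert hk, LinearMap.add_apply, hoa _ _ hdisj, ih,
        Finset.sum_insert hk]
  have h := key Finset.univ
  rwa [hρ.2.2, LinearMap.id_apply] at h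

end Aux

theorem key_le (Φ : (E →ₗ[ℝ] E) → (F →ₗ[ℝ] F))
    (hΦop : ∀ π, IsOrderProjection π → IsOrderProjection (Φ π))
    (hΦinf : ∀ π ρ, IsOrderProjection π → IsOrderProjection ρ →
      Φ (π ∘ₗ ρ) = Φ π ∘ₗ Φ ρ)
    (T : E → F) (hTpos : ∀ x : E, 0 ≤ T x)
    (hToa : ∀ x y : E, VDisjoint x y → T (x + y) = T x + T y)
    {n m : ℕ} {π : Fin n → E →ₗ[ℝ] E} {ρ : Fin m → E →ₗ[ℝ] E}
    (hπ : IsPartitionOfIdentity π) (hρ : IsPartitionOfIdentity ρ) (x : E) :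
    ∑ p : Fin n × Fin m, Φ (π p.1 ∘ₗ ρ p.2) (T ((π p.1 ∘ₗ ρ p.2) x)) ≤
      ∑ i, Φ (π i) (T (π i x)) := by
  rw [Fintype.sum_prod_type]
  refine sum_le_sum' fun i _ => ?_
  have hterm : ∀ j, Φ (π i ∘ₗ ρ j) (T ((π i ∘ₗ ρ j) x)) =
      Φ (π i) (Φ (ρ j) (T (ρ j (π i x)))) := by
    intro j
    rw [hΦinf _ _ (hπ.1 i) (hρ.1 j)]
    simp only [LinearMap.comp_apply]
    rw [op_comm (hπ.1 i) (hρ.1 j) x]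
  calc ∑ j, Φ (π i ∘ₗ ρ j) (T ((π i ∘ₗ ρ j) x))
      = Φ (π i) (∑ j, Φ (ρ j) (T (ρ j (π i x)))) := by
        rw [map_sum]; exact Finset.sum_congr rfl fun j _ => hterm j
    _ ≤ Φ (π i) (T (π i x)) := by
        refine op_mono (hΦop _ (hπ.1 i)) ?_
        calc ∑ j, Φ (ρ j) (T (ρ j (π i x))) ≤ ∑ j, T (ρ j (π i x)) :=
              sum_le_sum' fun j _ =>
                ((hΦop _ (hρ.1 j)).2 _ (hTpos _)).2
          _ = T (π i x) := (oa_sum T hToa hρ (π i x)).symm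

theorem refine_partition {n m : ℕ} {π : Fin n → E →ₗ[ℝ] E} {ρ : Fin m → E →ₗ[ℝ] E}
    (hπ : IsPartitionOfIdentity π) (hρ : IsPartitionOfIdentity ρ) :
    IsPartitionOfIdentity (fun k : Fin (n * m) =>
      π (finProdFinEquiv.symm k).1 ∘ₗ ρ (finProdFinEquiv.symm k).2) := by
  refine ⟨fun k => comp_isOP (hπ.1 _) (hρ.1 _), ?_, ?_⟩
  · intro k k' hkk'
    set p := finProdFinEquiv.symm k
    set q := finProdFinEquiv.symm k'
    have hpq : p ≠ q := fun h => hkk' (finProdFinEquiv.symm.injective h)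
    apply LinearMap.ext
    intro u
    simp only [LinearMap.comp_apply, LinearMap.zero_apply]
    have hswap : ρ p.2 (π q.1 (ρ q.2 u)) = π q.1 (ρ p.2 (ρ q.2 u)) :=
      op_comm (hρ.1 p.2) (hπ.1 q.1) (ρ q.2 u)
    rw [hswap]
    by_cases h1 : p.1 = q.1
    · have h2 : p.2 ≠ q.2 := fun h => hpq (Prod.ext h1 h)
      have : (ρ p.2 ∘ₗ ρ q.2) u = (0 : E →ₗ[ℝ] E) u := by rw [hρ.2.1 _ _ h2]
      simp only [LinearMap.comp_apply, LinearMap.zero_apply] at this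
      rw [this, map_zero, map_zero]
    · have : (π p.1 ∘ₗ π q.1) (ρ p.2 (ρ q.2 u)) =
          (0 : E →ₗ[ℝ] E) (ρ p.2 (ρ q.2 u)) := by
        rw [hπ.2.1 _ _ h1]
      simpa only [LinearMap.comp_apply, LinearMap.zero_apply] using this
  · have hsum : ∑ k : Fin (n * m),
        (π (finProdFinEquiv.symm k).1 ∘ₗ ρ (finProdFinEquiv.symm k).2) =
        ∑ p : Fin n × Fin m, (π p.1 ∘ₗ ρ p.2) :=
      Fintype.sum_equiv finProdFinEquiv.symm _ _ (fun k => rfl)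
    rw [hsum]
    apply LinearMap.ext
    intro u
    rw [LinearMap.sum_apply, Fintype.sum_prod_type]
    have : ∀ i, ∑ j, (π i ∘ₗ ρ j) u = π i u := by
      intro i
      calc ∑ j, (π i ∘ₗ ρ j) u = π i (∑ j, ρ j u) := by
            rw [map_sum]; rfl
        _ = π i u := by rw [← LinearMap.sum_apply, hρ.2.2]; rfl
    rw [Finset.sum_congr rfl fun i _ => this i, ← LinearMap.sum_apply, hπ.2.2]

/-- the map `T ↦ R(T)`, `R(T)(x) = inf { Σᵢ Φ(πᵢ)(T(πᵢ x)) }`, is additive on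
the positive cone of orthogonally additive operators. -/
theorem atomic_projection_additive
    (hE : HasPPP E) (hF : DedekindComplete F)
    (Φ : (E →ₗ[ℝ] E) → (F →ₗ[ℝ] F)) (hΦ : IsBooleanHom Φ)
    (T₁ T₂ : E → F)
    (hT₁pos : ∀ x : E, 0 ≤ T₁ x)
    (hT₁oa : ∀ x y : E, VDisjoint x y → T₁ (x + y) = T₁ x + T₁ y)
    (hT₂pos : ∀ x : E, 0 ≤ T₂ x)
    (hT₂oa : ∀ x y : E, VDisjoint x y → T₂ (x + y) = T₂ x + T₂ y) :
    ∀ x : E, ∀ a b : F, IsGLB (atomicSumSet Φ T₁ x) a → IsGLB (atomicSumSet Φ T₂ x) b →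
      IsGLB (atomicSumSet Φ (fun y => T₁ y + T₂ y) x) (a + b) := by
  obtain ⟨hΦop, hΦinf, -, -⟩ := hΦ
  intro x a b ha hb
  constructor
  · rintro w ⟨n, π, hπ, rfl⟩
    have h1 : a ≤ ∑ i, Φ (π i) (T₁ (π i x)) := ha.1 ⟨n, π, hπ, rfl⟩
    have h2 : b ≤ ∑ i, Φ (π i) (T₂ (π i x)) := hb.1 ⟨n, π, hπ, rfl⟩
    have hsplit : ∑ i, Φ (π i) (T₁ (π i x) + T₂ (π i x)) =
        (∑ i, Φ (π i) (T₁ (π i x))) + ∑ i, Φ (π i) (T₂ (π i x)) := by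
      rw [← Finset.sum_add_distrib]
      exact Finset.sum_congr rfl fun i _ => map_add _ _ _
    rw [hsplit]
    exact add_le_add h1 h2
  · intro c hc
    have key : ∀ s₁ ∈ atomicSumSet Φ T₁ x, ∀ s₂ ∈ atomicSumSet Φ T₂ x, c ≤ s₁ + s₂ := by
      rintro s₁ ⟨n, π, hπ, rfl⟩ s₂ ⟨m, ρ, hρ, rfl⟩
      set τ : Fin (n * m) → E →ₗ[ℝ] E := fun k =>
        π (finProdFinEquiv.symm k).1 ∘ₗ ρ (finProdFinEquiv.symm k).2 with hτ
      have hτpart : IsPartitionOfIdentity τ := refine_partition hπ hρ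
      have hcle : c ≤ ∑ k, Φ (τ k) (T₁ (τ k x) + T₂ (τ k x)) :=
        hc ⟨n * m, τ, hτpart, rfl⟩
      have hsplit : ∑ k, Φ (τ k) (T₁ (τ k x) + T₂ (τ k x)) =
          (∑ k, Φ (τ k) (T₁ (τ k x))) + ∑ k, Φ (τ k) (T₂ (τ k x)) := by
        rw [← Finset.sum_add_distrib]
        exact Finset.sum_congr rfl fun k _ => map_add _ _ _
      have hA : ∑ k, Φ (τ k) (T₁ (τ k x)) ≤ ∑ i, Φ (π i) (T₁ (π i x)) := by
        have he : ∑ k, Φ (τ k) (T₁ (τ k x)) =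
            ∑ p : Fin n × Fin m, Φ (π p.1 ∘ₗ ρ p.2) (T₁ ((π p.1 ∘ₗ ρ p.2) x)) :=
          Fintype.sum_equiv finProdFinEquiv.symm _ _ (fun k => rfl)
        rw [he]
        exact key_le Φ hΦop hΦinf T₁ hT₁pos hT₁oa hπ hρ x
      have hB : ∑ k, Φ (τ k) (T₂ (τ k x)) ≤ ∑ j, Φ (ρ j) (T₂ (ρ j x)) := by
        have hcomm : ∀ p : Fin n × Fin m, π p.1 ∘ₗ ρ p.2 = ρ p.2 ∘ₗ π p.1 := fun p =>
          LinearMap.ext fun u => op_comm (hπ.1 p.1) (hρ.1 p.2) u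
        have he : ∑ k, Φ (τ k) (T₂ (τ k x)) =
            ∑ q : Fin m × Fin n, Φ (ρ q.1 ∘ₗ π q.2) (T₂ ((ρ q.1 ∘ₗ π q.2) x)) := by
          have h1 : ∑ k, Φ (τ k) (T₂ (τ k x)) =
              ∑ p : Fin n × Fin m, Φ (π p.1 ∘ₗ ρ p.2) (T₂ ((π p.1 ∘ₗ ρ p.2) x)) :=
            Fintype.sum_equiv finProdFinEquiv.symm _ _ (fun k => rfl)
          rw [h1]
          refine Fintype.sum_equiv (Equiv.prodComm (Fin n) (Fin m)) _ _ fun p => ?_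
          simp only [Equiv.prodComm_apply, Prod.fst_swap, Prod.snd_swap]
          rw [hcomm p]
        rw [he]
        exact key_le Φ hΦop hΦinf T₂ hT₂pos hT₂oa hρ hπ x
      calc c ≤ _ := hcle
        _ = _ := hsplit
        _ ≤ (∑ i, Φ (π i) (T₁ (π i x))) + ∑ j, Φ (ρ j) (T₂ (ρ j x)) := add_le_add hA hB
    have h1 : ∀ s₂ ∈ atomicSumSet Φ T₂ x, c - s₂ ≤ a := by
      intro s₂ hs₂
      refine ha.2 fun s₁ hs₁ => ?_
      exact sub_le_iff_le_add.mpr (key s₁ hs₁ s₂ hs₂)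
    have h2 : c - a ≤ b := hb.2 fun s₂ hs₂ => by
      have := h1 s₂ hs₂
      exact sub_le_comm.mp this
    calc c = (c - a) + a := by abel
      _ ≤ b + a := add_le_add h2 (le_refl a)
      _ = a + b := add_comm b a

end VL
end
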